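/- Let p : E → B be a map of topological spaces with the unique lifting property for maps from cubes: for every continuous Ψ : [0,1]^p → B and every e0 ∈ E with p(e0) = Ψ(0), there is a unique continuous U : [0,1]^p → E with U(0) = e0 and p ∘ U = Ψ. If in addition E is contractible and each fiber of p has exactly two points, then π_k(B, b0) = 0 for all k ≥ 2 and π_1(B, b0) has exactly 2 elements, for any b0 ∈ B with path-connected B. -/

import Mathlib

open unitInterval Set Topology Topology.Homotopy



noncomputable section StmtAux

variable {E B : Type*} [TopologicalSpace E] [TopologicalSpace B]

/-- clamp to [0,1] -/
private def scl (x : ℝ) : ℝ := max 0 (min 1 x)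

private lemma scl_cont : Continuous scl :=
  continuous_const.max (continuous_const.min continuous_id)

private lemma scl_nonneg (x : ℝ) : 0 ≤ scl x := le_max_left _ _
private lemma scl_le_one (x : ℝ) : scl x ≤ 1 := max_le zero_le_one (min_le_left _ _)
private lemma scl_of_nonpos {x : ℝ} (h : x ≤ 0) : scl x = 0 :=
  max_eq_left (le_trans (min_le_right _ _) h)
private lemma scl_of_le {x : ℝ} (h0 : 0 ≤ x) (h1 : x ≤ 1) : scl x = x := by
  rw [scl, min_eq_right h1, max_eq_right h0]
private lemma scl_lt_one {x : ℝ} (h : scl x < 1) : x < 1 := by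
  by_contra hx
  rw [scl, min_eq_left (not_lt.1 hx), max_eq_right zero_le_one] at h
  exact lt_irrefl _ h


private lemma pIcc_zero {x : ℝ} (h : x ≤ 0) : Set.projIcc (0:ℝ) 1 zero_le_one x = 0 := by
  apply Subtype.ext
  rw [Set.coe_projIcc]
  show max 0 (min 1 x) = ((0:I):ℝ)
  rw [min_eq_right (h.trans zero_le_one), max_eq_left h]; rfl

private lemma pIcc_one {x : ℝ} (h : 1 ≤ x) : Set.projIcc (0:ℝ) 1 zero_le_one x = 1 := by
  apply Subtype.ext
  rw [Set.coe_projIcc]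
  show max 0 (min 1 x) = ((1:I):ℝ)
  rw [min_eq_left h, max_eq_right zero_le_one]; rfl

private lemma pIcc_coe {x : ℝ} (h0 : 0 ≤ x) (h1 : x ≤ 1) :
    ((Set.projIcc (0:ℝ) 1 zero_le_one x : I) : ℝ) = x := by
  rw [Set.coe_projIcc]
  show max 0 (min 1 x) = x
  rw [min_eq_right h1, max_eq_right h0]

/-- the cut-off function on the cube: 1 on the inner cube, 0 on the boundary -/
private def chi {k : ℕ} (y : Fin k → I) : ℝ :=
  ∏ i, scl (2 - 4 * |(y i : ℝ) - 2⁻¹|)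

private lemma chi_cont {k : ℕ} : Continuous (chi (k := k)) := by
  apply continuous_finset_prod
  intro i _
  exact scl_cont.comp <| (continuous_const.sub <| continuous_const.mul
    ((continuous_subtype_val.comp (continuous_apply i)).sub continuous_const).abs)

private lemma chi_nonneg {k : ℕ} (y : Fin k → I) : 0 ≤ chi y :=
  Finset.prod_nonneg fun i _ => scl_nonneg _

private lemma chi_le_one {k : ℕ} (y : Fin k → I) : chi y ≤ 1 :=
  Finset.prod_le_one (fun i _ => scl_nonneg _) (fun i _ => scl_le_one _)

private lemma chi_boundary {k : ℕ} {y : Fin k → I} (hy : y ∈ Cube.boundary (Fin k)) :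
    chi y = 0 := by
  obtain ⟨i, hi⟩ := hy
  apply Finset.prod_eq_zero (Finset.mem_univ i)
  have : |(y i : ℝ) - 2⁻¹| = 2⁻¹ := by
    rcases hi with hi | hi <;> rw [hi] <;> norm_num
  rw [this]
  apply scl_of_nonpos; norm_num

/-- the rescaled-cube map -/
private def rmap {k : ℕ} (t : I) (y : Fin k → I) : Fin k → I :=
  fun i => Set.projIcc (0:ℝ) 1 zero_le_one ((1 + (t:ℝ)) * ((y i : ℝ) - 2⁻¹) + 2⁻¹)

private lemma rmap_cont {k : ℕ} : Continuous (fun z : I × (Fin k → I) => rmap z.1 z.2) := by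
  apply continuous_pi
  intro i
  apply continuous_projIcc.comp
  exact ((continuous_const.add (continuous_subtype_val.comp continuous_fst)).mul
    (((continuous_apply i).comp continuous_snd).subtype_val.sub continuous_const)).add
    continuous_const

private lemma coe_I_mem (a : I) : (a : ℝ) ∈ Set.Icc (0:ℝ) 1 := a.2

private lemma rmap_zero {k : ℕ} (y : Fin k → I) : rmap 0 y = y := by
  funext i
  apply Subtype.ext
  have h0 := (y i).2.1; have h1 := (y i).2.2
  show ((Set.projIcc (0:ℝ) 1 zero_le_one ((1 + ((0:I):ℝ)) * ((y i : ℝ) - 2⁻¹) + 2⁻¹) : I) : ℝ) = _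
  rw [show ((0:I):ℝ) = (0:ℝ) from rfl]
  rw [show (1 + (0:ℝ)) * ((y i : ℝ) - 2⁻¹) + 2⁻¹ = (y i : ℝ) by ring]
  exact pIcc_coe h0 h1

private lemma rmap_boundary {k : ℕ} (t : I) {y : Fin k → I} {i : Fin k}
    (hi : y i = 0 ∨ y i = 1) : rmap t y ∈ Cube.boundary (Fin k) := by
  refine ⟨i, ?_⟩
  have ht0 := t.2.1; have ht1 := t.2.2
  rcases hi with hi | hi
  · left
    show Set.projIcc (0:ℝ) 1 zero_le_one ((1 + (t:ℝ)) * ((y i : ℝ) - 2⁻¹) + 2⁻¹) = 0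
    apply pIcc_zero
    rw [hi, show (((0:I)):ℝ) = (0:ℝ) from rfl]
    nlinarith
  · right
    show Set.projIcc (0:ℝ) 1 zero_le_one ((1 + (t:ℝ)) * ((y i : ℝ) - 2⁻¹) + 2⁻¹) = 1
    apply pIcc_one
    rw [hi, show (((1:I)):ℝ) = (1:ℝ) from rfl]
    nlinarith

private lemma rmap_one_boundary {k : ℕ} {y : Fin k → I} (hy : chi y ≠ 1) :
    rmap 1 y ∈ Cube.boundary (Fin k) := by
  -- some factor is < 1
  have : ∃ i : Fin k, scl (2 - 4 * |(y i : ℝ) - 2⁻¹|) ≠ 1 := by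
    by_contra h
    push_neg at h
    exact hy (Finset.prod_eq_one fun i _ => h i)
  obtain ⟨i, hi⟩ := this
  have hlt : scl (2 - 4 * |(y i : ℝ) - 2⁻¹|) < 1 := lt_of_le_of_ne (scl_le_one _) hi
  have habs : 2⁻¹ * 2⁻¹ < |(y i : ℝ) - 2⁻¹| := by
    have := scl_lt_one hlt; nlinarith
  refine ⟨i, ?_⟩
  rcases lt_abs.mp habs with h | h
  · right
    show Set.projIcc (0:ℝ) 1 zero_le_one ((1 + ((1:I):ℝ)) * ((y i : ℝ) - 2⁻¹) + 2⁻¹) = 1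
    apply pIcc_one
    rw [show (((1:I)):ℝ) = (1:ℝ) from rfl]
    nlinarith
  · left
    show Set.projIcc (0:ℝ) 1 zero_le_one ((1 + ((1:I):ℝ)) * ((y i : ℝ) - 2⁻¹) + 2⁻¹) = 0
    apply pIcc_zero
    rw [show (((1:I)):ℝ) = (1:ℝ) from rfl]
    nlinarith

/-- In a contractible space, any two maps from the cube that are constant (equal to `e0`)
on the boundary are homotopic rel the boundary. -/
private lemma contractible_homotopicRel [ContractibleSpace E] {k : ℕ} (e0 : E)
    (U V : C((Fin k → I), E))
    (hU : ∀ y ∈ Cube.boundary (Fin k), U y = e0)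
    (hV : ∀ y ∈ Cube.boundary (Fin k), V y = e0) :
    U.HomotopicRel V (Cube.boundary (Fin k)) := by
  obtain ⟨c, ⟨G⟩⟩ := id_nullhomotopic E
  -- the common target map
  let W : C((Fin k → I), E) :=
    ⟨fun y => G (Set.projIcc (0:ℝ) 1 zero_le_one (chi y), e0),
     G.continuous.comp ((continuous_projIcc.comp chi_cont).prodMk continuous_const)⟩
  suffices h : ∀ (U : C((Fin k → I), E)), (∀ y ∈ Cube.boundary (Fin k), U y = e0) →
      U.HomotopicRel W (Cube.boundary (Fin k)) by
    exact (h U hU).trans (h V hV).symm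
  intro U hU
  -- step 1 : homotope U to U ∘ (rmap 1)
  let U₁ : C((Fin k → I), E) :=
    ⟨fun y => U (rmap 1 y), U.continuous.comp (rmap_cont.comp (Continuous.prodMk_right 1))⟩
  have step1 : U.HomotopicRel U₁ (Cube.boundary (Fin k)) := by
    refine ⟨{ toFun := fun z => U (rmap z.1 z.2),
              continuous_toFun := U.continuous.comp rmap_cont,
              map_zero_left := fun y => by
                show U (rmap 0 y) = U y
                rw [rmap_zero],
              map_one_left := fun y => rfl,
              prop' := ?_ }⟩
    intro t y hy
    obtain ⟨i, hi⟩ := hy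
    show U (rmap t y) = U y
    rw [hU _ (rmap_boundary t hi), hU y ⟨i, hi⟩]
  -- step 2 : homotope U₁ to W using the contraction
  have step2 : U₁.HomotopicRel W (Cube.boundary (Fin k)) := by
    refine ⟨{ toFun := fun z => G (Set.projIcc (0:ℝ) 1 zero_le_one ((z.1 : ℝ) * chi z.2), U₁ z.2),
              continuous_toFun := G.continuous.comp
                ((continuous_projIcc.comp ((continuous_subtype_val.comp continuous_fst).mul
                  (chi_cont.comp continuous_snd))).prodMk (U₁.continuous.comp continuous_snd)),
              map_zero_left := ?_, map_one_left := ?_, prop' := ?_ }⟩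
    · intro y
      show G (Set.projIcc (0:ℝ) 1 zero_le_one (((0:I):ℝ) * chi y), U₁ y) = U₁ y
      have : Set.projIcc (0:ℝ) 1 zero_le_one (((0:I):ℝ) * chi y) = 0 := by
        apply pIcc_zero
        rw [show ((0:I):ℝ) = (0:ℝ) from rfl, zero_mul]
      rw [this, G.apply_zero]
      rfl
    · intro y
      show G (Set.projIcc (0:ℝ) 1 zero_le_one (((1:I):ℝ) * chi y), U₁ y) = W y
      rw [show ((1:I):ℝ) = (1:ℝ) from rfl, one_mul]
      by_cases hchi : chi y = 1
      · have h1 : Set.projIcc (0:ℝ) 1 zero_le_one (chi y) = 1 := pIcc_one (le_of_eq hchi.symm)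
        show G (Set.projIcc (0:ℝ) 1 zero_le_one (chi y), U₁ y)
          = G (Set.projIcc (0:ℝ) 1 zero_le_one (chi y), e0)
        rw [h1, G.apply_one, G.apply_one]
        rfl
      · have h2 : U₁ y = e0 := hU _ (rmap_one_boundary hchi)
        rw [h2]
        rfl
    · intro t y hy
      have hc := chi_boundary hy
      have hz : Set.projIcc (0:ℝ) 1 zero_le_one ((t:ℝ) * chi y) = 0 := by
        apply pIcc_zero
        rw [hc, mul_zero]
      show G (Set.projIcc (0:ℝ) 1 zero_le_one ((t:ℝ) * chi y), U₁ y) = U₁ y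
      rw [hz, G.apply_zero]
      rfl
  exact step1.trans step2

end StmtAux



section StmtAux2

variable {E B : Type*} [TopologicalSpace E] [TopologicalSpace B]

private lemma pathLift (p : E → B)
    (hlift : ∀ (n : ℕ) (Ψ : C((Fin n → I), B)) (e0 : E),
      p e0 = Ψ (fun _ => 0) →
      ∃! U : C((Fin n → I), E), U (fun _ => 0) = e0 ∧ ∀ x, p (U x) = Ψ x)
    (γ : C(I, B)) (e0 : E) (h : p e0 = γ 0) :
    ∃! u : C(I, E), u 0 = e0 ∧ ∀ t, p (u t) = γ t := by
  let φ := Homeomorph.funUnique (Fin 1) I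
  obtain ⟨U, ⟨hU0, hUp⟩, huniq⟩ := hlift 1 (γ.comp (⟨φ, φ.continuous⟩ : C(_, _))) e0 h
  refine ⟨U.comp (⟨φ.symm, φ.symm.continuous⟩ : C(_, _)), ⟨hU0, fun t => hUp _⟩, ?_⟩
  intro u' hu'
  have hU' : u'.comp (⟨φ, φ.continuous⟩ : C(_, _)) = U := huniq _ ⟨hu'.1, fun x => hu'.2 _⟩
  ext t
  exact congrArg (fun (V : C((Fin 1 → I), E)) => V (φ.symm t)) hU'

private lemma rigid (p : E → B)
    (hlift : ∀ (n : ℕ) (Ψ : C((Fin n → I), B)) (e0 : E),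
      p e0 = Ψ (fun _ => 0) →
      ∃! U : C((Fin n → I), E), U (fun _ => 0) = e0 ∧ ∀ x, p (U x) = Ψ x)
    (u : C(I, E)) (b : B) (hb : ∀ t, p (u t) = b) (t : I) : u t = u 0 := by
  obtain ⟨v, hv, huniq⟩ := pathLift p hlift (ContinuousMap.const I b) (u 0) (hb 0)
  have h1 : u = v := huniq u ⟨rfl, hb⟩
  have h2 : ContinuousMap.const I (u 0) = v := huniq _ ⟨rfl, fun _ => hb 0⟩
  exact DFunLike.congr_fun (h1.trans h2.symm) t

private lemma sqLift (p : E → B)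
    (hlift : ∀ (n : ℕ) (Ψ : C((Fin n → I), B)) (e0 : E),
      p e0 = Ψ (fun _ => 0) →
      ∃! U : C((Fin n → I), E), U (fun _ => 0) = e0 ∧ ∀ x, p (U x) = Ψ x)
    (Hc : C(I × I, B)) (e0 : E) (h : p e0 = Hc (0, 0)) :
    ∃! K : C(I × I, E), K (0, 0) = e0 ∧ ∀ z, p (K z) = Hc z := by
  let φ := Homeomorph.piFinTwo (fun _ : Fin 2 => I)
  obtain ⟨U, ⟨hU0, hUp⟩, huniq⟩ := hlift 2 (Hc.comp (⟨φ, φ.continuous⟩ : C(_, _))) e0 h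
  have hsymm00 : φ.symm (0, 0) = (fun _ => (0:I)) := by
    funext i; fin_cases i <;> rfl
  refine ⟨U.comp (⟨φ.symm, φ.symm.continuous⟩ : C(_, _)), ⟨?_, fun z => hUp _⟩, ?_⟩
  · show U (φ.symm (0,0)) = e0
    rw [hsymm00]; exact hU0
  intro K' hK'
  have hU' : K'.comp (⟨φ, φ.continuous⟩ : C(_, _)) = U :=
    huniq _ ⟨hK'.1, fun x => hK'.2 _⟩
  ext z
  exact congrArg (fun (V : C((Fin 2 → I), E)) => V (φ.symm z)) hU'

private lemma pushRel (p : E → B) (hp : Continuous p) {X : Type*} [TopologicalSpace X]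
    {u v : C(X, E)} {f g : C(X, B)} {S : Set X}
    (hf : ∀ x, p (u x) = f x) (hg : ∀ x, p (v x) = g x)
    (h : u.HomotopicRel v S) : f.HomotopicRel g S := by
  obtain ⟨K⟩ := h
  exact ⟨{ toFun := fun z => p (K z),
           continuous_toFun := hp.comp K.continuous,
           map_zero_left := fun x => by
             show p (K (0, x)) = f x
             rw [K.apply_zero]; exact hf x,
           map_one_left := fun x => by
             show p (K (1, x)) = g x
             rw [K.apply_one]; exact hg x,
           prop' := fun t x hx => by
             show p (K (t, x)) = f x
             rw [K.eq_fst t hx]; exact hf x }⟩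

private lemma lift_boundary_const {k : ℕ} (hk : 2 ≤ k) (p : E → B)
    (hlift : ∀ (n : ℕ) (Ψ : C((Fin n → I), B)) (e0 : E),
      p e0 = Ψ (fun _ => 0) →
      ∃! U : C((Fin n → I), E), U (fun _ => 0) = e0 ∧ ∀ x, p (U x) = Ψ x)
    (b0 : B) (f : C((Fin k → I), B)) (hf : ∀ y ∈ Cube.boundary (Fin k), f y = b0)
    (U : C((Fin k → I), E)) (hU : ∀ x, p (U x) = f x)
    {y : Fin k → I} (hy : y ∈ Cube.boundary (Fin k)) : U y = U (fun _ => 0) := by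
  obtain ⟨i, hi⟩ := hy
  have hnt : Nontrivial (Fin k) := by
    refine ⟨⟨0, by omega⟩, ⟨1, by omega⟩, ?_⟩
    simp [Fin.ext_iff]
  obtain ⟨j, hj⟩ := exists_ne i
  have hmulc : ∀ c : I, Continuous (fun t : I => t * c) := fun c =>
    Continuous.subtype_mk (continuous_subtype_val.mul continuous_const) _
  let σ₂ : C(I, (Fin k → I)) :=
    ⟨fun t j' => if j' = i then y i else t * y j', by
      apply continuous_pi
      intro j'
      by_cases h : j' = i
      · simp only [if_pos h]; exact continuous_const
      · simp only [if_neg h]; exact hmulc _⟩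
  have hσ₂b : ∀ t, σ₂ t ∈ Cube.boundary (Fin k) := fun t => ⟨i, by
    show (if i = i then y i else t * y i) = 0 ∨ (if i = i then y i else t * y i) = 1
    rw [if_pos rfl]; exact hi⟩
  have h2 := rigid p hlift (U.comp σ₂) b0
    (fun t => by show p (U (σ₂ t)) = b0; rw [hU, hf _ (hσ₂b t)]) 1
  have e1 : σ₂ (1:I) = y := by
    funext j'
    show (if j' = i then y i else 1 * y j') = y j'
    by_cases h : j' = i
    · rw [if_pos h, h]
    · rw [if_neg h]; exact Subtype.ext (one_mul _)
  set z : Fin k → I := fun j' => if j' = i then y i else 0 with hz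
  have e0' : σ₂ (0:I) = z := by
    funext j'
    show (if j' = i then y i else 0 * y j') = (if j' = i then y i else 0)
    by_cases h : j' = i
    · rw [if_pos h, if_pos h]
    · rw [if_neg h, if_neg h]; exact Subtype.ext (zero_mul _)
  have hUy : U y = U z := by
    have : U (σ₂ 1) = U (σ₂ 0) := h2
    rwa [e1, e0'] at this
  rcases hi with hi0 | hi1
  · have : z = fun _ => (0:I) := by
      funext j'
      show (if j' = i then y i else 0) = (0:I)
      by_cases h : j' = i
      · rw [if_pos h]; exact hi0
      · rw [if_neg h]
    rw [hUy, this]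
  · let σ₁ : C(I, (Fin k → I)) :=
      ⟨fun t j' => if j' = i then t else 0, by
        apply continuous_pi
        intro j'
        by_cases h : j' = i
        · simp only [if_pos h]; exact continuous_id
        · simp only [if_neg h]; exact continuous_const⟩
    have hσ₁b : ∀ t, σ₁ t ∈ Cube.boundary (Fin k) := fun t => ⟨j, Or.inl (by
      show (if j = i then t else 0) = 0
      rw [if_neg hj])⟩
    have h1 := rigid p hlift (U.comp σ₁) b0
      (fun t => by show p (U (σ₁ t)) = b0; rw [hU, hf _ (hσ₁b t)]) 1
    have f1 : σ₁ (1:I) = z := by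
      funext j'
      show (if j' = i then (1:I) else 0) = (if j' = i then y i else 0)
      by_cases h : j' = i
      · rw [if_pos h, if_pos h, hi1]
      · rw [if_neg h, if_neg h]
    have f0 : σ₁ (0:I) = fun _ => (0:I) := by
      funext j'
      show (if j' = i then (0:I) else 0) = 0
      by_cases h : j' = i
      · rw [if_pos h]
      · rw [if_neg h]
    have : U (σ₁ 1) = U (σ₁ 0) := h1
    rw [f1, f0] at this
    rw [hUy, this]

end StmtAux2

/-- Let `p : E → B` be a continuous surjection with the unique lifting
property for maps from cubes: every continuous `Ψ : [0,1]^n → B` with a prescribed lift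
`e0` of `Ψ(0)` admits a unique continuous lift `U : [0,1]^n → E` with `U(0) = e0` and
`p ∘ U = Ψ`.  If moreover `E` is contractible and every fiber of `p` has exactly two
points, then for every basepoint `b0` of the path-connected space `B` we have
`π_k(B, b0) = 0` for all `k ≥ 2`, and `π₁(B, b0)` has exactly two elements. -/
theorem stmt_11 {E B : Type*} [TopologicalSpace E] [TopologicalSpace B]
    (p : E → B) (hcont : Continuous p) (hsurj : Function.Surjective p)
    (htwo : ∀ b : B, Nat.card (p ⁻¹' {b}) = 2)
    [ContractibleSpace E] [PathConnectedSpace B]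
    (hlift : ∀ (n : ℕ) (Ψ : C((Fin n → unitInterval), B)) (e0 : E),
      p e0 = Ψ (fun _ => 0) →
      ∃! U : C((Fin n → unitInterval), E),
        U (fun _ => 0) = e0 ∧ ∀ x, p (U x) = Ψ x)
    (b0 : B) :
    (∀ k : ℕ, 2 ≤ k → Subsingleton (HomotopyGroup (Fin k) B b0)) ∧
      Nat.card (FundamentalGroup B b0) = 2 := by
  obtain ⟨e0, he0⟩ := hsurj b0
  constructor
  · -- higher homotopy groups
    intro k hk
    constructor
    intro a b
    refine Quotient.inductionOn₂ a b ?_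
    intro f g
    apply Quotient.sound
    have hbd0 : (fun _ => (0:I)) ∈ Cube.boundary (Fin k) := ⟨⟨0, by omega⟩, Or.inl rfl⟩
    -- lift f
    obtain ⟨Uf, ⟨hUf0, hUfp⟩, _⟩ := hlift k f.1 e0 (he0.trans (f.2 _ hbd0).symm)
    obtain ⟨Ug, ⟨hUg0, hUgp⟩, _⟩ := hlift k g.1 e0 (he0.trans (g.2 _ hbd0).symm)
    have hUfB : ∀ y ∈ Cube.boundary (Fin k), Uf y = e0 := fun y hy => by
      rw [lift_boundary_const hk p hlift b0 f.1 f.2 Uf hUfp hy]; exact hUf0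
    have hUgB : ∀ y ∈ Cube.boundary (Fin k), Ug y = e0 := fun y hy => by
      rw [lift_boundary_const hk p hlift b0 g.1 g.2 Ug hUgp hy]; exact hUg0
    have hE : Uf.HomotopicRel Ug (Cube.boundary (Fin k)) :=
      contractible_homotopicRel e0 Uf Ug hUfB hUgB
    exact pushRel p hcont hUfp hUgp hE
  · -- fundamental group
    have key : ∀ γ : Path b0 b0, ∃! u : C(I, E), u 0 = e0 ∧ ∀ t, p (u t) = γ t :=
      fun γ => pathLift p hlift γ.toContinuousMap e0 (by rw [he0]; exact γ.source.symm)
    let uγ : Path b0 b0 → C(I, E) := fun γ => (key γ).exists.choose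
    have uγ0 : ∀ γ, (uγ γ) 0 = e0 := fun γ => (key γ).exists.choose_spec.1
    have uγp : ∀ γ t, p (uγ γ t) = γ t := fun γ => (key γ).exists.choose_spec.2
    have uγuniq : ∀ (γ : Path b0 b0) (v : C(I, E)),
        (v 0 = e0 ∧ ∀ t, p (v t) = γ t) → v = uγ γ :=
      fun γ v hv => (key γ).unique hv ⟨uγ0 γ, uγp γ⟩
    have hmem : ∀ γ : Path b0 b0, uγ γ 1 ∈ p ⁻¹' {b0} := fun γ => by
      show p (uγ γ 1) ∈ ({b0} : Set B)
      rw [uγp γ 1]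
      exact γ.target
    let m : Path b0 b0 → ↥(p ⁻¹' {b0}) := fun γ => ⟨uγ γ 1, hmem γ⟩
    have wd : ∀ (γ₀ γ₁ : Path b0 b0), Path.Homotopic γ₀ γ₁ → m γ₀ = m γ₁ := by
      intro γ₀ γ₁ hh
      obtain ⟨H⟩ := hh
      set Hc : C(I × I, B) := H.toHomotopy.toContinuousMap with hHc
      have h00 : p e0 = Hc (0, 0) := by
        rw [he0]
        have : Hc (0, 0) = γ₀ 0 := H.apply_zero 0
        rw [this, γ₀.source]
      obtain ⟨K, ⟨hK0, hKp⟩, hKuniq⟩ := sqLift p hlift Hc e0 h00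
      have hside0 : ∀ t : I, K (t, 0) = e0 := by
        intro t
        have hco : Continuous (fun t : I => K (t, (0:I))) :=
          K.continuous.comp (continuous_id.prodMk continuous_const)
        have hr := rigid p hlift ⟨fun t => K (t, 0), hco⟩ b0 (fun s => by
          show p (K (s, 0)) = b0
          rw [hKp]
          have : Hc (s, 0) = γ₀ 0 := H.eq_fst s (Set.mem_insert _ _)
          rw [this, γ₀.source]) t
        exact hr.trans hK0
      have hside1 : K (0, 1) = K (1, 1) := by
        have hco : Continuous (fun t : I => K (t, (1:I))) :=
          K.continuous.comp (continuous_id.prodMk continuous_const)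
        have hr := rigid p hlift ⟨fun t => K (t, 1), hco⟩ b0 (fun s => by
          show p (K (s, 1)) = b0
          rw [hKp]
          have : Hc (s, 1) = γ₀ 1 := H.eq_fst s (Set.mem_insert_iff.mpr (Or.inr rfl))
          rw [this, γ₀.target]) 1
        exact hr.symm
      have hbot : (⟨fun x => K (0, x),
          K.continuous.comp (continuous_const.prodMk continuous_id)⟩ : C(I, E)) = uγ γ₀ := by
        apply uγuniq
        refine ⟨hK0, fun x => ?_⟩
        show p (K (0, x)) = γ₀ x
        rw [hKp]
        exact H.apply_zero x
      have htop : (⟨fun x => K (1, x),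
          K.continuous.comp (continuous_const.prodMk continuous_id)⟩ : C(I, E)) = uγ γ₁ := by
        apply uγuniq
        refine ⟨hside0 1, fun x => ?_⟩
        show p (K (1, x)) = γ₁ x
        rw [hKp]
        exact H.apply_one x
      apply Subtype.ext
      show uγ γ₀ 1 = uγ γ₁ 1
      rw [← hbot, ← htop]
      show K (0, 1) = K (1, 1)
      exact hside1
    let mbar : Path.Homotopic.Quotient b0 b0 → ↥(p ⁻¹' {b0}) := Quotient.lift m wd
    have hsurjm : Function.Surjective mbar := by
      rintro ⟨e1, he1⟩
      have he1' : p e1 = b0 := he1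
      let Γ : Path e0 e1 := PathConnectedSpace.somePath e0 e1
      let γ : Path b0 b0 := (Γ.map hcont).cast he0.symm he1'.symm
      refine ⟨Quotient.mk _ γ, ?_⟩
      have hlift' : Γ.toContinuousMap = uγ γ := by
        apply uγuniq
        refine ⟨Γ.source, fun t => ?_⟩
        show p (Γ t) = γ t
        rfl
      show m γ = ⟨e1, he1⟩
      apply Subtype.ext
      show uγ γ 1 = e1
      rw [← hlift']
      exact Γ.target
    have hinjm : Function.Injective mbar := by
      intro a b
      refine Quotient.inductionOn₂ a b ?_
      intro γ₀ γ₁ hab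
      apply Quotient.sound
      have he1 : uγ γ₀ 1 = uγ γ₁ 1 := congrArg Subtype.val hab
      let Γ₀ : Path e0 (uγ γ₀ 1) := ⟨uγ γ₀, uγ0 γ₀, rfl⟩
      let Γ₁ : Path e0 (uγ γ₀ 1) := ⟨uγ γ₁, uγ0 γ₁, he1.symm⟩
      have hhom : Γ₀.Homotopic Γ₁ := SimplyConnectedSpace.paths_homotopic Γ₀ Γ₁
      obtain ⟨HH⟩ := hhom
      exact ⟨{ toFun := fun z => p (HH z),
               continuous_toFun := hcont.comp HH.continuous,
               map_zero_left := fun x => by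
                 show p (HH (0, x)) = γ₀ x
                 rw [HH.apply_zero]
                 exact uγp γ₀ x,
               map_one_left := fun x => by
                 show p (HH (1, x)) = γ₁ x
                 rw [HH.apply_one]
                 exact uγp γ₁ x,
               prop' := fun t x hx => by
                 show p (HH (t, x)) = γ₀ x
                 rw [HH.eq_fst t hx]
                 exact uγp γ₀ x }⟩
    calc Nat.card (FundamentalGroup B b0)
        = Nat.card (Path.Homotopic.Quotient b0 b0) :=
          Nat.card_congr (Equiv.refl _ :
            FundamentalGroup B b0 ≃ Path.Homotopic.Quotient b0 b0)
      _ = Nat.card ↥(p ⁻¹' {b0}) := Nat.card_eq_of_bijective mbar ⟨hinjm, hsurjm⟩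
      _ = 2 := htwo b0
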